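/- arXiv:1208.3946 — 4 statements merged into one kernel-verified Lean document; each statement's English description precedes it below -/
import Mathlib

section
/- Let m be an odd integer with m ≥ 7, and let p' be the smallest odd prime that does not divide m. Then 5·p' < 3·m (i.e., p' < 0.6·m). -/
/-- Let `m` be an odd integer with `m ≥ 7`, and let `p'` be the smallest odd prime
that does not divide `m`. Then `5·p' < 3·m` (i.e., `p' < 0.6·m`). -/
theorem smallest_odd_prime_not_dividing_lt
    (m p' : ℕ) (hm_odd : Odd m) (hm : 7 ≤ m)
    (hp_prime : Nat.Prime p') (hp_odd : Odd p') (hp_ndvd : ¬ p' ∣ m)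
    (hp_min : ∀ q : ℕ, Nat.Prime q → Odd q → ¬ q ∣ m → p' ≤ q) :
    5 * p' < 3 * m := by
  -- any odd prime below p' divides m
  have key : ∀ q : ℕ, Nat.Prime q → Odd q → q < p' → q ∣ m := by
    intro q hq hqo hlt
    by_contra h
    exact absurd (hp_min q hq hqo h) (by omega)
  have hp3 : 3 ≤ p' := by
    rcases hp_odd with ⟨k, hk⟩
    have := hp_prime.two_le
    omega
  rcases lt_or_ge p' 11 with hsmall | hbig
  · -- p' ∈ {3, 5, 7}
    interval_cases p'
    · omega
    · exact absurd hp_prime (by norm_num)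
    · -- p' = 5 : 3 ∣ m, m odd
      have h3 : 3 ∣ m := key 3 (by norm_num) ⟨1, rfl⟩ (by norm_num)
      rcases hm_odd with ⟨k, hk⟩
      omega
    · exact absurd hp_prime (by norm_num)
    · -- p' = 7 : 3 ∣ m and 5 ∣ m
      have h3 : 3 ∣ m := key 3 (by norm_num) ⟨1, rfl⟩ (by norm_num)
      have h5 : 5 ∣ m := key 5 (by norm_num) ⟨2, rfl⟩ (by norm_num)
      omega
    · exact absurd hp_prime (by norm_num)
    · exact absurd hp_prime (by norm_num)
    · exact absurd hp_odd (by decide)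
  · -- p' ≥ 11 : Bertrand
    obtain ⟨q, hq, hq1, hq2⟩ := Nat.exists_prime_lt_and_le_two_mul (p' / 2) (by omega)
    rcases hp_odd with ⟨k, hk⟩
    have hqlt : q < p' := by omega
    have hq6 : 6 ≤ q := by omega
    have hqodd : Odd q := hq.odd_of_ne_two (by omega)
    have hqm : q ∣ m := key q hq hqodd hqlt
    have h5 : 5 ∣ m := key 5 (by norm_num) ⟨2, rfl⟩ (by omega)
    have hcop : Nat.Coprime 5 q := (Nat.coprime_primes (by norm_num) hq).mpr (by omega)
    have h5q : 5 * q ∣ m := hcop.mul_dvd_of_dvd_of_dvd h5 hqm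
    have := Nat.le_of_dvd (by omega) h5q
    omega
end

section
/- Let m be an odd integer with m ≥ 7, let p' be the smallest odd prime not dividing m, and let t' be the smallest positive integer that is coprime to m and satisfies 2·t' > m + 1. Then 2·t' = m + p'. -/
/-- Let `m` be an odd integer with `m ≥ 7`, let `p'` be the smallest odd prime not
dividing `m`, and let `t'` be the smallest positive integer coprime to `m` with
`2·t' > m + 1`. Then `2·t' = m + p'`. -/
theorem two_mul_least_coprime_eq_add_smallest_odd_prime
    (m p' t' : ℕ) (hm_odd : Odd m) (hm : 7 ≤ m)
    (hp_prime : Nat.Prime p') (hp_odd : Odd p') (hp_ndvd : ¬ p' ∣ m)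
    (hp_min : ∀ q : ℕ, Nat.Prime q → Odd q → ¬ q ∣ m → p' ≤ q)
    (ht_pos : 0 < t') (ht_cop : Nat.Coprime t' m) (ht_gt : m + 1 < 2 * t')
    (ht_min : ∀ t : ℕ, 0 < t → Nat.Coprime t m → m + 1 < 2 * t → t' ≤ t) :
    2 * t' = m + p' := by
  have hp2 : p' ≠ 2 := by
    rintro rfl; exact (by decide : ¬ Odd 2) hp_odd
  have hp3 : 3 ≤ p' := by
    have := hp_prime.two_le; omega
  -- m + p' is even
  obtain ⟨k, hk⟩ := hm_odd.add_odd hp_odd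
  have h2k : 2 * k = m + p' := by omega
  -- k is coprime to m
  have hcop : Nat.Coprime k m := by
    by_contra h
    have hg : Nat.gcd k m ≠ 1 := h
    set q := (Nat.gcd k m).minFac with hq
    have hqp : Nat.Prime q := Nat.minFac_prime hg
    have hqd : q ∣ Nat.gcd k m := Nat.minFac_dvd _
    have hqk : q ∣ k := hqd.trans (Nat.gcd_dvd_left _ _)
    have hqm : q ∣ m := hqd.trans (Nat.gcd_dvd_right _ _)
    have hqp' : q ∣ p' := by
      have h1 : q ∣ m + p' := h2k ▸ hqk.mul_left 2
      have h2 := Nat.dvd_sub h1 hqm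
      simpa using h2
    exact hp_ndvd (((Nat.prime_dvd_prime_iff_eq hqp hp_prime).mp hqp') ▸ hqm)
  have hkpos : 0 < k := by omega
  have hle : t' ≤ k := ht_min k hkpos hcop (by omega)
  -- other direction: 2 * t' ≥ m + p'
  by_contra hne
  have hlt : 2 * t' < m + p' := by omega
  obtain ⟨a, ha⟩ := hm_odd
  set d := 2 * t' - m with hd
  have hdodd : Odd d := ⟨t' - a - 1, by omega⟩
  have hd3 : 3 ≤ d := by
    obtain ⟨c, hc⟩ := hdodd; omega
  have hdp : d < p' := by omega
  set q := d.minFac with hq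
  have hqp : Nat.Prime q := Nat.minFac_prime (by omega)
  have hqd : q ∣ d := Nat.minFac_dvd _
  have hqodd : Odd q := by
    rcases Nat.even_or_odd q with h | h
    swap
    · exact h
    · have : 2 ∣ q := h.two_dvd
      have : (2 : ℕ) ∣ d := this.trans hqd
      obtain ⟨c, hc⟩ := hdodd; omega
  have hqle : q ≤ d := Nat.minFac_le (by omega)
  have hqm : q ∣ m := by
    by_contra h
    have := hp_min q hqp hqodd h
    omega
  have hqt : q ∣ t' := by
    have h2t : q ∣ 2 * t' := by
      have : d + m = 2 * t' := by omega
      exact this ▸ Nat.dvd_add hqd hqm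
    rcases (Nat.Prime.dvd_mul hqp).mp h2t with h | h
    · have := (Nat.prime_dvd_prime_iff_eq hqp Nat.prime_two).mp h
      obtain ⟨c, hc⟩ := hqodd
      omega
    · exact h
  have hq1 : q = 1 := Nat.dvd_one.mp (ht_cop ▸ Nat.dvd_gcd hqt hqm)
  have := hqp.two_le
  omega
end

section
/- Let m be an integer with m > 6, and let t be the smallest positive integer such that 2·t > m and t is coprime to m. Then 2·t ≤ m + 4 (i.e., t − m/2 ≤ 2) and t < m − 1. -/
/-- Let `m > 6` and let `t` be the smallest positive integer with `2·t > m` that is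
coprime to `m`. Then `2·t ≤ m + 4` (i.e. `t − m/2 ≤ 2`) and `t < m − 1`. -/
theorem least_coprime_bounds
    (m t : ℕ) (hm : 6 < m)
    (ht_pos : 0 < t) (ht_gt : m < 2 * t) (ht_cop : Nat.Coprime t m)
    (ht_min : ∀ s : ℕ, 0 < s → m < 2 * s → Nat.Coprime s m → t ≤ s) :
    2 * t ≤ m + 4 ∧ t < m - 1 := by
  have key : 2 * t ≤ m + 4 := by
    by_cases h2 : m % 2 = 1
    · -- m odd, take s = (m+1)/2, then 2s = m+1 and gcd divides 1
      set s := (m + 1) / 2 with hs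
      have h2s : 2 * s = m + 1 := by omega
      have hcop : Nat.Coprime s m := by
        have hd : Nat.gcd s m ∣ 2 * s - m :=
          Nat.dvd_sub (Dvd.dvd.mul_left (Nat.gcd_dvd_left s m) 2) (Nat.gcd_dvd_right s m)
        rw [show 2 * s - m = 1 by omega] at hd
        exact Nat.eq_one_of_dvd_one hd
      have := ht_min s (by omega) (by omega) hcop
      omega
    · by_cases h4 : m % 4 = 0
      · -- m ≡ 0 mod 4, take s = m/2 + 1, odd, gcd divides 2
        set s := m / 2 + 1 with hs
        have h2s : 2 * s = m + 2 := by omega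
        have hsodd : s % 2 = 1 := by omega
        have hcop : Nat.Coprime s m := by
          have hd : Nat.gcd s m ∣ 2 * s - m :=
            Nat.dvd_sub (Dvd.dvd.mul_left (Nat.gcd_dvd_left s m) 2) (Nat.gcd_dvd_right s m)
          rw [show 2 * s - m = 2 by omega] at hd
          have hds : Nat.gcd s m ∣ s := Nat.gcd_dvd_left s m
          rcases (Nat.dvd_prime Nat.prime_two).mp hd with h | h
          · exact h
          · exfalso
            rw [h] at hds
            obtain ⟨k, hk⟩ := hds
            omega
        have := ht_min s (by omega) (by omega) hcop
        omega
      · -- m ≡ 2 mod 4, take s = m/2 + 2, odd, gcd divides 4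
        set s := m / 2 + 2 with hs
        have h2s : 2 * s = m + 4 := by omega
        have hsodd : s % 2 = 1 := by omega
        have hcop : Nat.Coprime s m := by
          have hd : Nat.gcd s m ∣ 2 * s - m :=
            Nat.dvd_sub (Dvd.dvd.mul_left (Nat.gcd_dvd_left s m) 2) (Nat.gcd_dvd_right s m)
          rw [show 2 * s - m = 4 by omega] at hd
          have hds : Nat.gcd s m ∣ s := Nat.gcd_dvd_left s m
          have hle : Nat.gcd s m ≤ 4 := Nat.le_of_dvd (by norm_num) hd
          obtain ⟨k, hk⟩ := hds
          obtain ⟨j, hj⟩ := hd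
          interval_cases h : Nat.gcd s m <;> omega
        have := ht_min s (by omega) (by omega) hcop
        omega
  exact ⟨key, by omega⟩
end

section
/- Let m be an odd integer with m ≥ 7, let t' be the smallest positive integer coprime to m with 2·t' > m + 1, and let k be an integer with k > 36 such that 1000·(2·m + 1) < 1144·k (i.e., p = 2m+1 satisfies p < 1.144·k). Then 2·t' + 2 < k. -/
lemma aux_bound (m t' c : ℕ) (hm_odd : Odd m) (hm : 7 ≤ m)
    (hc_odd : Odd c) (hc : 3 ≤ c) (hcop : Nat.Coprime c m)
    (ht_min : ∀ t : ℕ, 0 < t → Nat.Coprime t m → m + 1 < 2 * t → t' ≤ t) :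
    2 * t' ≤ m + c := by
  obtain ⟨a, ha⟩ : Even (m + c) := hm_odd.add_odd hc_odd
  have ha2 : m + c = 2 * a := by omega
  have hcop2 : Nat.Coprime (m + c) m := by
    rw [Nat.add_comm, Nat.coprime_add_self_left]
    exact hcop
  have hcopa : Nat.Coprime a m := by
    rw [ha2] at hcop2
    exact Nat.Coprime.coprime_dvd_left (dvd_mul_left a 2) hcop2
  have := ht_min a (by omega) hcopa (by omega)
  omega

/-- Let `m` be odd with `m ≥ 7`, let `t'` be the smallest positive integer coprime
to `m` with `2·t' > m + 1`, and let `k > 36` with `1000·(2·m + 1) < 1144·k`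
(i.e. `p = 2m + 1 < 1.144·k`). Then `2·t' + 2 < k`. -/
theorem new_weight_lt
    (m t' k : ℕ) (hm_odd : Odd m) (hm : 7 ≤ m)
    (ht_pos : 0 < t') (ht_cop : Nat.Coprime t' m) (ht_gt : m + 1 < 2 * t')
    (ht_min : ∀ t : ℕ, 0 < t → Nat.Coprime t m → m + 1 < 2 * t → t' ≤ t)
    (hk : 36 < k) (hp : 1000 * (2 * m + 1) < 1144 * k) :
    2 * t' + 2 < k := by
  obtain ⟨r, hr⟩ := id hm_odd
  by_cases hsmall : m ≤ 17
  · -- use t = m - 1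
    have hcop : Nat.Coprime (m - 1) m := by
      have h : Nat.Coprime (m - 1) (1 + (m - 1)) :=
        Nat.coprime_add_self_right.mpr (Nat.coprime_one_right _)
      have e : 1 + (m - 1) = m := by omega
      rwa [e] at h
    have := ht_min (m - 1) (by omega) hcop (by omega)
    omega
  · -- m ≥ 19
    have hm19 : 19 ≤ m := by omega
    have key : ∀ c : ℕ, Odd c → 3 ≤ c → Nat.Coprime c m → 2 * t' ≤ m + c :=
      fun c h1 h2 h3 => aux_bound m t' c hm_odd hm h1 h2 h3 ht_min
    by_cases h3 : (3 : ℕ) ∣ m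
    · by_cases h5 : (5 : ℕ) ∣ m
      · by_cases h7 : (7 : ℕ) ∣ m
        · -- 3,5,7 ∣ m; take q = least odd prime not dividing m
          have hQ : ∃ p, Nat.Prime p ∧ 2 < p ∧ ¬ p ∣ m := by
            obtain ⟨p, hp1, hp2⟩ := Nat.exists_infinite_primes (m + 1)
            exact ⟨p, hp2, by omega, fun hd => by
              have := Nat.le_of_dvd (by omega) hd; omega⟩
          set q := Nat.find hQ with hq_def
          obtain ⟨hq_prime, hq2, hq_ndvd⟩ := Nat.find_spec hQ
          have hmin : ∀ r < q, Nat.Prime r → 2 < r → r ∣ m := by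
            intro r hrq hrp hr2
            by_contra hnd
            exact Nat.find_min hQ hrq ⟨hrp, hr2, hnd⟩
          have hq_odd : Odd q := hq_prime.odd_of_ne_two (by omega)
          have hq_cop : Nat.Coprime q m := (hq_prime.coprime_iff_not_dvd).mpr hq_ndvd
      -- q ≥ 17
          have h11 : (11 : ℕ) ∣ m ∨ q ≤ 11 := by
            by_cases h : q ≤ 11
            · exact Or.inr h
            · exact Or.inl (hmin 11 (by omega) (by norm_num) (by norm_num))
          have h13 : (13 : ℕ) ∣ m ∨ q ≤ 13 := by
            by_cases h : q ≤ 13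
            · exact Or.inr h
            · exact Or.inl (hmin 13 (by omega) (by norm_num) (by norm_num))
          have hq_bound := key q hq_odd (by omega) hq_cop
          by_cases hq13 : q ≤ 13
          · -- m ≥ 3*5*7 = 105 would hold but m ≥ 19 with c ≤ 13 suffices... need m ≥ 19 and c ≤ 13
            omega
          · -- q ≥ 17 (since q is odd prime, not ≤ 13)
            have hq_odd2 : q % 2 = 1 := Nat.odd_iff.mp hq_odd
            have hq17 : 17 ≤ q := by
              by_contra hlt
              have h15' : q = 15 := by omega
              have hbad : Nat.Prime 15 := by rw [← h15']; exact hq_prime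
              norm_num at hbad
            -- Bertrand: prime p' with (q-1)/2 < p' ≤ q-1
            obtain ⟨p', hp'_prime, hp'_lt, hp'_le⟩ :=
              Nat.exists_prime_lt_and_le_two_mul ((q - 1) / 2) (by omega)
            have h2n : 2 * ((q - 1) / 2) = q - 1 := by omega
            have hp'_big : 9 ≤ p' := by omega
            have hp'_dvd : p' ∣ m := hmin p' (by omega) hp'_prime (by omega)
            have h15 : (15 : ℕ) ∣ m :=
              Nat.Coprime.mul_dvd_of_dvd_of_dvd (by norm_num) h3 h5
            have h105 : (105 : ℕ) ∣ m :=
              Nat.Coprime.mul_dvd_of_dvd_of_dvd (by norm_num) h15 h7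
            have hp'_ndvd105 : ¬ p' ∣ 105 := by
              intro hd
              have := Nat.le_of_dvd (by norm_num) hd
              interval_cases p' <;> revert hp'_prime hd <;> decide
            have hcop105 : Nat.Coprime 105 p' :=
              ((hp'_prime.coprime_iff_not_dvd).mpr hp'_ndvd105).symm
            have hbig : 105 * p' ∣ m :=
              Nat.Coprime.mul_dvd_of_dvd_of_dvd hcop105 h105 hp'_dvd
            have hmge : 105 * p' ≤ m := Nat.le_of_dvd (by omega) hbig
            omega
        · have := key 7 (by decide) (by norm_num)
            ((Nat.Prime.coprime_iff_not_dvd (by norm_num)).mpr h7)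
          omega
      · have := key 5 (by decide) (by norm_num)
          ((Nat.Prime.coprime_iff_not_dvd (by norm_num)).mpr h5)
        omega
    · have := key 3 (by decide) (by norm_num)
        ((Nat.Prime.coprime_iff_not_dvd (by norm_num)).mpr h3)
      omega
end
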